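/- Let ρ be a density matrix, A a Hermitian operator, and λ, σ > 0 with log Tr(e^{τA} ρ) ≤ −(σ/λ) log(1 − λτ) for all 0 ≤ τ < 1/λ. Then for every x ≥ σ, Tr(Π_{≥x}^A ρ) ≤ (x/σ)^{σ/λ} e^{−(x−σ)/λ}, where Π_{≥x}^A is the spectral projection of A onto eigenvalues ≥ x. -/

import Mathlib

open Matrix
open scoped ComplexOrder

/-- The spectral projection of a Hermitian matrix `A` onto the eigenspaces with
eigenvalue satisfying the predicate `P`. -/
noncomputable def specProj {n : ℕ} {A : Matrix (Fin n) (Fin n) ℂ}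
    (hA : A.IsHermitian) (P : ℝ → Prop) [DecidablePred P] : Matrix (Fin n) (Fin n) ℂ :=
  ∑ i : Fin n, (if P (hA.eigenvalues i) then
    Matrix.vecMulVec (hA.eigenvectorBasis i) (fun j => star (hA.eigenvectorBasis i j))
    else (0 : Matrix (Fin n) (Fin n) ℂ))

section aux
variable {n : ℕ} {A : Matrix (Fin n) (Fin n) ℂ} (hA : A.IsHermitian)

lemma trace_vecMulVec_mul' (v w : Fin n → ℂ) (ρ : Matrix (Fin n) (Fin n) ℂ) :
    Matrix.trace (Matrix.vecMulVec v w * ρ) = w ⬝ᵥ (ρ *ᵥ v) := by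
  simp only [Matrix.trace, Matrix.diag, Matrix.mul_apply, Matrix.vecMulVec_apply,
    dotProduct, Matrix.mulVec]
  rw [Finset.sum_comm]
  congr 1; ext b
  simp [Finset.mul_sum, dotProduct]
  congr 1; ext a; ring

lemma spectral_sum' (c : Fin n → ℂ) :
    (hA.eigenvectorUnitary : Matrix (Fin n) (Fin n) ℂ) * Matrix.diagonal c *
      star (hA.eigenvectorUnitary : Matrix (Fin n) (Fin n) ℂ) =
    ∑ i : Fin n, c i • Matrix.vecMulVec (hA.eigenvectorBasis i)
      (fun j => star (hA.eigenvectorBasis i j)) := by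
  ext a b
  rw [Matrix.star_eq_conjTranspose, Matrix.mul_apply]
  simp only [Matrix.mul_diagonal, Matrix.conjTranspose_apply, Finset.sum_apply,
    Matrix.smul_apply, Matrix.vecMulVec_apply, smul_eq_mul, Matrix.star_apply,
    Matrix.IsHermitian.eigenvectorUnitary_apply]
  simp only [Matrix.sum_apply, Matrix.smul_apply, Matrix.vecMulVec_apply, smul_eq_mul]
  refine Finset.sum_congr rfl fun j _ => ?_
  ring

lemma exp_smul_eq_sum' (τ : ℝ) :
    NormedSpace.exp ((τ : ℂ) • A) =
    (hA.eigenvectorUnitary : Matrix (Fin n) (Fin n) ℂ) *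
      Matrix.diagonal (fun i => ((Real.exp (τ * hA.eigenvalues i) : ℝ) : ℂ)) *
      star (hA.eigenvectorUnitary : Matrix (Fin n) (Fin n) ℂ) := by
  set U : Matrix (Fin n) (Fin n) ℂ := (hA.eigenvectorUnitary : Matrix (Fin n) (Fin n) ℂ) with hU
  have hU1 : star U * U = 1 := Unitary.coe_star_mul_self _
  have hU2 : U * star U = 1 := Unitary.coe_mul_star_self _
  have hUunit : IsUnit U := ⟨⟨U, star U, hU2, hU1⟩, rfl⟩
  have hUinv : U⁻¹ = star U := Matrix.inv_eq_left_inv hU1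
  have hsm : (τ : ℂ) • A =
      U * Matrix.diagonal (fun i => ((τ * hA.eigenvalues i : ℝ) : ℂ)) * U⁻¹ := by
    rw [hUinv]
    conv_lhs => rw [hA.spectral_theorem, Unitary.conjStarAlgAut_apply, ← hU]
    rw [show (τ : ℂ) • (U * Matrix.diagonal (RCLike.ofReal ∘ hA.eigenvalues) * star U) =
        U * ((τ : ℂ) • Matrix.diagonal (RCLike.ofReal ∘ hA.eigenvalues)) * star U by
      rw [Matrix.mul_smul, Matrix.smul_mul]]
    congr 2
    ext i j
    simp only [Matrix.smul_apply, Matrix.diagonal_apply, smul_eq_mul, Function.comp_apply]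
    split <;> simp [Complex.ofReal_mul]
  have hexp : NormedSpace.exp (fun i : Fin n => ((τ * hA.eigenvalues i : ℝ) : ℂ)) =
      fun i => ((Real.exp (τ * hA.eigenvalues i) : ℝ) : ℂ) := by
    funext i
    rw [Pi.coe_exp, ← Complex.exp_eq_exp_ℂ, Complex.ofReal_exp]
  rw [hsm, Matrix.exp_conj U _ hUunit, Matrix.exp_diagonal, hexp, hUinv]
end aux

theorem tail_from_localized_mgf {n : ℕ} (ρ A : Matrix (Fin n) (Fin n) ℂ)
    (hρ : ρ.PosSemidef) (hρtr : ρ.trace = 1) (hA : A.IsHermitian)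
    (lam sigma : ℝ) (hlam : 0 < lam) (hsigma : 0 < sigma)
    (hmgf : ∀ τ : ℝ, 0 ≤ τ → τ < 1 / lam →
      Real.log (Matrix.trace (NormedSpace.exp ((τ : ℂ) • A) * ρ)).re ≤
        -(sigma / lam) * Real.log (1 - lam * τ)) :
    ∀ x : ℝ, sigma ≤ x →
      (Matrix.trace (specProj hA (fun t => x ≤ t) * ρ)).re ≤
        (x / sigma) ^ (sigma / lam) * Real.exp (-(x - sigma) / lam) := by
  intro x hx
  have hx0 : 0 < x := lt_of_lt_of_le hsigma hx
  set d : Fin n → ℂ := fun i =>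
    star ⇑(hA.eigenvectorBasis i) ⬝ᵥ (ρ *ᵥ ⇑(hA.eigenvectorBasis i)) with hd_def
  have hd : ∀ i, 0 ≤ (d i).re := fun i => by
    have := hρ.dotProduct_mulVec_nonneg ⇑(hA.eigenvectorBasis i)
    simpa using (Complex.le_def.mp this).1
  set τ : ℝ := (x - sigma) / (lam * x) with hτ_def
  have hτ0 : 0 ≤ τ := div_nonneg (by linarith) (by positivity)
  have hτ1 : τ < 1 / lam := by
    rw [div_lt_div_iff₀ (by positivity) hlam]
    nlinarith
  have hS : (Matrix.trace (specProj hA (fun t => x ≤ t) * ρ)).re =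
      ∑ i, (if x ≤ hA.eigenvalues i then (d i).re else 0) := by
    rw [specProj, Finset.sum_mul, Matrix.trace_sum, Complex.re_sum]
    refine Finset.sum_congr rfl fun i _ => ?_
    by_cases h : x ≤ hA.eigenvalues i
    · simp only [h, if_true, trace_vecMulVec_mul']
      rfl
    · simp [h]
  have hT : (Matrix.trace (NormedSpace.exp ((τ : ℂ) • A) * ρ)).re =
      ∑ i, Real.exp (τ * hA.eigenvalues i) * (d i).re := by
    rw [exp_smul_eq_sum' hA τ, spectral_sum' hA, Finset.sum_mul, Matrix.trace_sum,
      Complex.re_sum]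
    refine Finset.sum_congr rfl fun i _ => ?_
    rw [Matrix.smul_mul, Matrix.trace_smul, smul_eq_mul, trace_vecMulVec_mul']
    rw [Complex.mul_re]
    simp only [Complex.ofReal_re, Complex.ofReal_im, zero_mul, sub_zero]
    rfl
  have chern : (Matrix.trace (specProj hA (fun t => x ≤ t) * ρ)).re ≤
      Real.exp (-(τ * x)) * (Matrix.trace (NormedSpace.exp ((τ : ℂ) • A) * ρ)).re := by
    rw [hS, hT, Finset.mul_sum]
    refine Finset.sum_le_sum fun i _ => ?_
    by_cases h : x ≤ hA.eigenvalues i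
    · simp only [h, if_true]
      rw [← mul_assoc, ← Real.exp_add]
      have h1 : (1 : ℝ) ≤ Real.exp (-(τ * x) + τ * hA.eigenvalues i) := by
        rw [Real.one_le_exp_iff]
        nlinarith
      nlinarith [hd i, h1]
    · simp only [h, if_false]
      exact mul_nonneg (Real.exp_nonneg _) (mul_nonneg (Real.exp_nonneg _) (hd i))
  have hxne : x ≠ 0 := ne_of_gt hx0
  have hlne : lam ≠ 0 := ne_of_gt hlam
  have hτx : τ * x = (x - sigma) / lam := by
    rw [hτ_def]
    field_simp
  have h1m : 1 - lam * τ = sigma / x := by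
    rw [hτ_def]
    field_simp
    ring
  rcases le_or_gt (Matrix.trace (NormedSpace.exp ((τ : ℂ) • A) * ρ)).re 0 with hT0 | hT0
  · have h2 : (Matrix.trace (specProj hA (fun t => x ≤ t) * ρ)).re ≤ 0 := by
      have h4 : Real.exp (-(τ * x)) * (Matrix.trace (NormedSpace.exp ((τ : ℂ) • A) * ρ)).re ≤ 0 :=
        mul_nonpos_of_nonneg_of_nonpos (Real.exp_nonneg _) hT0
      linarith [chern, h4]
    have h3 : 0 ≤ (x / sigma) ^ (sigma / lam) * Real.exp (-(x - sigma) / lam) := by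
      positivity
    linarith
  · have hlog := hmgf τ hτ0 hτ1
    have hTle : (Matrix.trace (NormedSpace.exp ((τ : ℂ) • A) * ρ)).re ≤
        Real.exp (-(sigma / lam) * Real.log (1 - lam * τ)) :=
      (Real.log_le_iff_le_exp hT0).mp hlog
    have hmain : (Matrix.trace (specProj hA (fun t => x ≤ t) * ρ)).re ≤
        Real.exp (-(τ * x)) * Real.exp (-(sigma / lam) * Real.log (1 - lam * τ)) := by
      calc (Matrix.trace (specProj hA (fun t => x ≤ t) * ρ)).re
          ≤ Real.exp (-(τ * x)) * (Matrix.trace (NormedSpace.exp ((τ : ℂ) • A) * ρ)).re :=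
            chern
        _ ≤ _ := by
            apply mul_le_mul_of_nonneg_left hTle (Real.exp_nonneg _)
    have heq : Real.exp (-(τ * x)) * Real.exp (-(sigma / lam) * Real.log (1 - lam * τ)) =
        (x / sigma) ^ (sigma / lam) * Real.exp (-(x - sigma) / lam) := by
      rw [h1m, hτx]
      have hlogeq : Real.log (sigma / x) = -Real.log (x / sigma) := by
        rw [← Real.log_inv, inv_div]
      rw [hlogeq]
      have hrw : (x / sigma) ^ (sigma / lam) =
          Real.exp (Real.log (x / sigma) * (sigma / lam)) := by
        rw [← Real.rpow_def_of_pos (by positivity)]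
      rw [hrw, ← Real.exp_add, ← Real.exp_add]
      ring_nf
    rw [← heq]
    exact hmain
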